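/- For nonnegative integers n, m, r with r ≤ n and real θ > 0, the r-th falling factorial moment of the random variable R_{n,m} with distribution P(R_{n,m}=x) = x!·C(n,x)·C(m,x)·(θ+x)^{(m-x)}/(θ+n)^{(m)} equals (r!/(θ+n)^{(m)}) · Σ_{s=0}^{r} C(n-s, r-s)·(-1)^s·C(n,s)·(θ+n-s)^{(m)}. That is, Σ_x x^{[r]}·P(R_{n,m}=x) equals this expression, where x^{[r]} = x(x-1)···(x-r+1) is the falling factorial. -/

import Mathlib

open Finset

/-- Rising factorial `a^{(k)} = a(a+1)⋯(a+k-1)`. -/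
noncomputable def rise (a : ℝ) (k : ℕ) : ℝ := ∏ i ∈ Finset.range k, (a + i)

/-- Falling factorial `a^{[k]} = a(a-1)⋯(a-k+1)`. -/
noncomputable def fall (a : ℝ) (k : ℕ) : ℝ := ∏ i ∈ Finset.range k, (a - i)


lemma rise_succ (a : ℝ) (k : ℕ) : rise a (k+1) = rise a k * (a + k) :=
  Finset.prod_range_succ _ _

lemma rise_succ' (a : ℝ) (k : ℕ) : rise a (k+1) = a * rise (a+1) k := by
  unfold rise
  rw [Finset.prod_range_succ']
  simp only [Nat.cast_zero, add_zero]
  rw [mul_comm]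
  congr 1
  apply Finset.prod_congr rfl
  intros; push_cast; ring

lemma fall_eq (x r : ℕ) : fall (x:ℝ) r = (x.descFactorial r : ℝ) := by
  induction r with
  | zero => simp [fall]
  | succ r ih =>
    rw [fall, Finset.prod_range_succ, ← fall, ih, Nat.descFactorial_succ]
    rcases lt_or_ge r x with h | h
    · rw [Nat.cast_mul, Nat.cast_sub h.le]
      ring
    · rcases h.lt_or_eq with h' | h'
      · rw [Nat.descFactorial_eq_zero_iff_lt.2 h']
        simp [Nat.sub_eq_zero_of_le h]
      · subst h'
        simp

lemma dF_succ_cast (n x : ℕ) :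
    ((n.descFactorial (x+1) : ℕ) : ℝ) = ((n:ℝ) - x) * (n.descFactorial x : ℝ) := by
  rcases lt_or_ge x n with h | h
  · rw [Nat.descFactorial_succ, Nat.cast_mul, Nat.cast_sub h.le]
  · rcases h.lt_or_eq with h' | h'
    · rw [Nat.descFactorial_eq_zero_iff_lt.2 h', Nat.descFactorial_eq_zero_iff_lt.2 (by omega)]
      simp
    · subst h'
      rw [Nat.descFactorial_eq_zero_iff_lt.2 (by omega)]
      simp

lemma lemA (n : ℕ) : ∀ (m : ℕ) (θ : ℝ),
    ∑ x ∈ range (m+1), (m.choose x : ℝ) * (n.descFactorial x : ℝ) * rise (θ + x) (m - x)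
      = rise (θ + n) m := by
  intro m
  induction m with
  | zero => intro θ; simp [rise]
  | succ m ih =>
    intro θ
    rw [Finset.sum_range_succ' _ (m+1)]
    have hsplit : ∀ x ∈ range (m+1),
        ((m+1).choose (x+1) : ℝ) * (n.descFactorial (x+1) : ℝ) * rise (θ + ↑(x+1)) (m + 1 - (x+1))
        = ((m.choose (x+1) : ℝ) * (n.descFactorial (x+1) : ℝ) * rise (θ + ↑(x+1)) (m + 1 - (x+1)))
          + ((θ + n) * ((m.choose x : ℝ) * (n.descFactorial x : ℝ) * rise ((θ+1) + x) (m - x))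
             - (m.choose x : ℝ) * (n.descFactorial x : ℝ) * rise (θ + x) (m + 1 - x)) := by
      intro x hx
      have hx' : x ≤ m := Nat.lt_succ_iff.1 (Finset.mem_range.1 hx)
      have hp : ((m+1).choose (x+1) : ℝ) = (m.choose (x+1) : ℝ) + (m.choose x : ℝ) := by
        rw [Nat.choose_succ_succ]; push_cast; ring
      have hd : (n.descFactorial (x+1) : ℝ) = ((θ + n) - (θ + x)) * (n.descFactorial x : ℝ) := by
        rw [dF_succ_cast]; ring_nf
      have hm1 : m + 1 - (x + 1) = m - x := by omega
      have hrise : rise (θ + ↑(x+1)) (m - x) = rise ((θ+1) + x) (m - x) := by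
        congr 1; push_cast; ring
      have hrise2 : (θ + x) * rise ((θ+1) + x) (m - x) = rise (θ + x) (m + 1 - x) := by
        have h3 : m + 1 - x = (m - x) + 1 := by omega
        rw [h3, rise_succ']
        congr 2; ring
      rw [hp, hm1, hrise, hd, ← hrise2]
      ring
    rw [Finset.sum_congr rfl hsplit, Finset.sum_add_distrib, Finset.sum_sub_distrib,
      ← Finset.mul_sum, ih (θ+1)]
    have hs' := Finset.sum_range_succ' (fun x => (m.choose x : ℝ) * (n.descFactorial x : ℝ)
        * rise (θ + x) (m + 1 - x)) (m+1)
    rw [Finset.sum_range_succ] at hs'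
    simp only [Nat.choose_succ_self, Nat.cast_zero, zero_mul, add_zero, Nat.choose_zero_right,
      Nat.descFactorial_zero, Nat.cast_one, one_mul, Nat.sub_zero] at hs' ⊢
    rw [rise_succ' (θ + ↑n) m]
    have h4 : θ + ↑n + 1 = θ + 1 + ↑n := by ring
    rw [h4]
    linarith [hs']

lemma lemB (m : ℕ) : ∀ (r : ℕ) (a : ℝ),
    ∑ s ∈ range (r+1), (-1:ℝ)^s * (r.choose s : ℝ) * rise (a - s) m
      = (m.descFactorial r : ℝ) * rise a (m - r) := by
  intro r
  induction r with
  | zero => intro a; simp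
  | succ r ih =>
    intro a
    rw [Finset.sum_range_succ' _ (r+1)]
    have hsplit : ∀ s ∈ range (r+1),
        (-1:ℝ)^(s+1) * ((r+1).choose (s+1) : ℝ) * rise (a - ↑(s+1)) m
        = ((-1:ℝ)^(s+1) * (r.choose (s+1) : ℝ) * rise (a - ↑(s+1)) m)
          - (-1:ℝ)^s * (r.choose s : ℝ) * rise ((a-1) - s) m := by
      intro s hs
      have hp : ((r+1).choose (s+1) : ℝ) = (r.choose s : ℝ) + (r.choose (s+1) : ℝ) := by
        rw [Nat.choose_succ_succ]; push_cast; ring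
      have hrise : rise (a - ↑(s+1)) m = rise ((a-1) - s) m := by
        congr 1; push_cast; ring
      rw [hp, hrise]
      ring_nf
    rw [Finset.sum_congr rfl hsplit, Finset.sum_sub_distrib, ih (a-1)]
    have hs' := Finset.sum_range_succ' (fun s => (-1:ℝ)^s * (r.choose s : ℝ) * rise (a - s) m) (r+1)
    rw [Finset.sum_range_succ] at hs'
    simp only [Nat.choose_succ_self, Nat.cast_zero, zero_mul, mul_zero, add_zero, sub_zero,
      Nat.choose_zero_right, Nat.cast_one, one_mul, pow_zero, mul_one] at hs' ⊢
    rw [ih a] at hs'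
    -- hs' : dF m r * rise a (m-r) = ∑ f(s+1) + rise a m
    -- goal : ∑ f(s+1) + rise a m - dF m r * rise (a-1) (m-r) = dF m (r+1) * rise a (m-(r+1))
    have key : (m.descFactorial r : ℝ) * rise a (m-r) - (m.descFactorial r : ℝ) * rise (a-1) (m-r)
        = (m.descFactorial (r+1) : ℝ) * rise a (m-(r+1)) := by
      rcases lt_or_ge r m with h | h
      · have h1 : m - r = (m - (r+1)) + 1 := by omega
        have h2 : (m.descFactorial (r+1) : ℝ) = ((m:ℝ) - r) * (m.descFactorial r : ℝ) := by
          rw [Nat.descFactorial_succ, Nat.cast_mul, Nat.cast_sub h.le]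
        rw [h1, rise_succ, rise_succ', h2]
        have h3 : ((m - (r+1) : ℕ) : ℝ) = (m:ℝ) - r - 1 := by
          rw [Nat.cast_sub (by omega)]; push_cast; ring
        rw [h3]
        ring_nf
      · rcases h.lt_or_eq with h' | h'
        · rw [Nat.descFactorial_eq_zero_iff_lt.2 h',
            Nat.descFactorial_eq_zero_iff_lt.2 (by omega)]
          simp
        · subst h'
          have h0 : m.descFactorial (m+1) = 0 := Nat.descFactorial_eq_zero_iff_lt.2 (by omega)
          rw [h0, Nat.sub_self]
          simp [rise]
    linarith [hs', key]

lemma chooseC (r : ℕ) : ∀ (m y : ℕ),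
    (r+y).descFactorial r * m.choose (r+y) = m.descFactorial r * (m-r).choose y := by
  induction r with
  | zero => intro m y; simp
  | succ r ih =>
    intro m y
    have sub1 : ∀ k y : ℕ, k.choose y * (k - y) = k * (k-1).choose y := by
      intro k y
      cases k with
      | zero => cases y <;> simp
      | succ k =>
        rw [← Nat.choose_succ_right_eq, Nat.add_sub_cancel]
        rw [← Nat.add_one_mul_choose_eq]
    have h1 : (r+1+y).descFactorial (r+1) = (r+y+1) * (r+y).descFactorial r := by
      have : r+1+y = (r+y)+1 := by omega
      rw [this, Nat.succ_descFactorial_succ]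
    have h2 : (r+y+1) * m.choose (r+1+y) = m.choose (r+y) * (m - (r+y)) := by
      have : r+1+y = (r+y)+1 := by omega
      rw [this, mul_comm, Nat.choose_succ_right_eq]
    calc (r+1+y).descFactorial (r+1) * m.choose (r+1+y)
        = (r+y).descFactorial r * ((r+y+1) * m.choose (r+1+y)) := by rw [h1]; ring
      _ = (r+y).descFactorial r * (m.choose (r+y) * (m - (r+y))) := by rw [h2]
      _ = (r+y).descFactorial r * m.choose (r+y) * (m - r - y) := by
          rw [← mul_assoc]; congr 1; omega
      _ = m.descFactorial r * ((m-r).choose y * (m - r - y)) := by rw [ih m y]; ring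
      _ = m.descFactorial r * ((m-r) * ((m-r-1)).choose y) := by rw [sub1 (m-r) y]
      _ = m.descFactorial (r+1) * (m-(r+1)).choose y := by
          rw [Nat.descFactorial_succ]
          have : m - (r+1) = m - r - 1 := by omega
          rw [this]; ring

lemma chooseD {n r s : ℕ} (hr : r ≤ n) (hs : s ≤ r) :
    r.factorial * ((n-s).choose (r-s) * n.choose s) = n.descFactorial r * r.choose s := by
  have h := Nat.choose_mul (n := n) hs
  rw [Nat.descFactorial_eq_factorial_mul_choose]
  calc r.factorial * ((n-s).choose (r-s) * n.choose s)
      = r.factorial * (n.choose s * (n-s).choose (r-s)) := by ring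
    _ = r.factorial * (n.choose r * r.choose s) := by rw [← h]
    _ = r.factorial * n.choose r * r.choose s := by ring

lemma key (n m r : ℕ) (hr : r ≤ n) (θ : ℝ) :
    ∑ x ∈ Finset.range (min n m + 1),
      fall (x : ℝ) r *
        ((x.factorial : ℝ) * (n.choose x) * (m.choose x) * rise (θ + x) (m - x))
      = (r.factorial : ℝ) *
          ∑ s ∈ Finset.range (r + 1),
            ((n - s).choose (r - s) : ℝ) * (-1 : ℝ) ^ s * (n.choose s) *
              rise (θ + n - s) m := by
  -- RHS evaluation
  have hRHS : (r.factorial : ℝ) *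
      ∑ s ∈ Finset.range (r + 1),
        ((n - s).choose (r - s) : ℝ) * (-1 : ℝ) ^ s * (n.choose s) * rise (θ + n - s) m
      = (n.descFactorial r : ℝ) * ((m.descFactorial r : ℝ) * rise (θ + n) (m - r)) := by
    rw [Finset.mul_sum]
    have hterm : ∀ s ∈ range (r+1),
        (r.factorial : ℝ) * (((n - s).choose (r - s) : ℝ) * (-1 : ℝ) ^ s * (n.choose s)
          * rise (θ + n - s) m)
        = (n.descFactorial r : ℝ) * ((-1:ℝ)^s * (r.choose s : ℝ) * rise ((θ + n) - s) m) := by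
      intro s hs
      have hs' : s ≤ r := Nat.lt_succ_iff.1 (Finset.mem_range.1 hs)
      have h := chooseD hr hs'
      have h2 : (r.factorial : ℝ) * (((n - s).choose (r - s) : ℝ) * (n.choose s : ℝ))
          = (n.descFactorial r : ℝ) * (r.choose s : ℝ) := by
        exact_mod_cast congrArg (fun t : ℕ => (t : ℝ)) h
      calc (r.factorial : ℝ) * (((n - s).choose (r - s) : ℝ) * (-1 : ℝ) ^ s * (n.choose s)
            * rise (θ + n - s) m)
          = ((r.factorial : ℝ) * (((n - s).choose (r - s) : ℝ) * (n.choose s : ℝ)))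
            * ((-1:ℝ)^s * rise (θ + n - s) m) := by ring
        _ = ((n.descFactorial r : ℝ) * (r.choose s : ℝ)) * ((-1:ℝ)^s * rise (θ + n - s) m) := by
            rw [h2]
        _ = (n.descFactorial r : ℝ) * ((-1:ℝ)^s * (r.choose s : ℝ) * rise ((θ + n) - s) m) := by
            ring
    rw [Finset.sum_congr rfl hterm, ← Finset.mul_sum, lemB m r (θ + n)]
  rw [hRHS]
  -- extend LHS sum range to m+1
  have hext : ∑ x ∈ Finset.range (min n m + 1),
      fall (x : ℝ) r * ((x.factorial : ℝ) * (n.choose x) * (m.choose x) * rise (θ + x) (m - x))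
      = ∑ x ∈ Finset.range (m + 1),
      fall (x : ℝ) r * ((x.factorial : ℝ) * (n.choose x) * (m.choose x) * rise (θ + x) (m - x)) := by
    apply Finset.sum_subset
    · apply Finset.range_subset_range.2; omega
    · intro x hx hx'
      have h1 : x ≤ m := Nat.lt_succ_iff.1 (Finset.mem_range.1 hx)
      have h2 : n < x := by
        have := Finset.mem_range.not.1 hx'
        omega
      rw [Nat.choose_eq_zero_of_lt h2]
      simp
  rw [hext]
  rcases lt_or_ge m r with hmr | hmr
  · -- r > m : both sides vanish
    have hz : ∀ x ∈ range (m+1),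
        fall (x : ℝ) r * ((x.factorial : ℝ) * (n.choose x) * (m.choose x) * rise (θ + x) (m - x))
        = 0 := by
      intro x hx
      have h1 : x ≤ m := Nat.lt_succ_iff.1 (Finset.mem_range.1 hx)
      rw [fall_eq, Nat.descFactorial_eq_zero_iff_lt.2 (by omega)]
      simp
    rw [Finset.sum_congr rfl hz, Finset.sum_const, smul_zero,
      Nat.descFactorial_eq_zero_iff_lt.2 (by omega : m < r)]
    simp
  · -- r ≤ m
    have hm1 : m + 1 = r + (m - r + 1) := by omega
    rw [hm1, Finset.sum_range_add]
    have hz1 : ∀ x ∈ range r,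
        fall (x : ℝ) r * ((x.factorial : ℝ) * (n.choose x) * (m.choose x) * rise (θ + x) (m - x))
        = 0 := by
      intro x hx
      have h1 : x < r := Finset.mem_range.1 hx
      rw [fall_eq, Nat.descFactorial_eq_zero_iff_lt.2 h1]
      simp
    rw [Finset.sum_congr rfl hz1, Finset.sum_const, smul_zero, zero_add]
    have hterm : ∀ y ∈ range (m - r + 1),
        fall ((r + y : ℕ) : ℝ) r * (((r+y).factorial : ℝ) * (n.choose (r+y)) * (m.choose (r+y))
          * rise (θ + ↑(r+y)) (m - (r+y)))
        = (n.descFactorial r : ℝ) * ((m.descFactorial r : ℝ) *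
            (((m-r).choose y : ℝ) * ((n-r).descFactorial y : ℝ)
              * rise ((θ + r) + y) ((m - r) - y))) := by
      intro y hy
      rw [fall_eq]
      have e1 : ((r+y).factorial : ℝ) * ((n.choose (r+y) : ℕ) : ℝ) = (n.descFactorial (r+y) : ℝ) := by
        rw [Nat.descFactorial_eq_factorial_mul_choose]
        push_cast; ring
      have e2 : (n.descFactorial (r+y) : ℝ)
          = ((n-r).descFactorial y : ℝ) * (n.descFactorial r : ℝ) := by
        have := Nat.descFactorial_mul_descFactorial (Nat.le_add_right r y) (n := n)
        rw [Nat.add_sub_cancel_left] at this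
        exact_mod_cast this.symm
      have e3 : ((r+y).descFactorial r : ℝ) * (m.choose (r+y) : ℝ)
          = (m.descFactorial r : ℝ) * ((m-r).choose y : ℝ) := by
        exact_mod_cast congrArg (fun t : ℕ => (t : ℝ)) (chooseC r m y)
      have e4 : θ + ((r+y : ℕ) : ℝ) = (θ + r) + y := by push_cast; ring
      have e5 : m - (r+y) = (m - r) - y := by omega
      calc ((r+y).descFactorial r : ℝ) * (((r+y).factorial : ℝ) * (n.choose (r+y))
            * (m.choose (r+y)) * rise (θ + ↑(r+y)) (m - (r+y)))
          = (((r+y).factorial : ℝ) * (n.choose (r+y)))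
            * (((r+y).descFactorial r : ℝ) * (m.choose (r+y)))
            * rise (θ + ↑(r+y)) (m - (r+y)) := by ring
        _ = ((n-r).descFactorial y : ℝ) * (n.descFactorial r : ℝ)
            * ((m.descFactorial r : ℝ) * ((m-r).choose y : ℝ))
            * rise ((θ + r) + y) ((m - r) - y) := by rw [e1, e2, e3, e4, e5]
        _ = (n.descFactorial r : ℝ) * ((m.descFactorial r : ℝ) *
            (((m-r).choose y : ℝ) * ((n-r).descFactorial y : ℝ)
              * rise ((θ + r) + y) ((m - r) - y))) := by ring
    rw [Finset.sum_congr rfl hterm, ← Finset.mul_sum, ← Finset.mul_sum,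
      lemA (n - r) (m - r) (θ + r)]
    have : (θ + ↑r) + ((n - r : ℕ) : ℝ) = θ + n := by
      rw [Nat.cast_sub hr]; ring
    rw [this]

theorem stmt_1 (n m r : ℕ) (hr : r ≤ n) (θ : ℝ) (hθ : 0 < θ) :
    ∑ x ∈ Finset.range (min n m + 1),
      fall (x : ℝ) r *
        ((x.factorial : ℝ) * (n.choose x) * (m.choose x) * rise (θ + x) (m - x)
          / rise (θ + n) m)
      = (r.factorial : ℝ) / rise (θ + n) m *
          ∑ s ∈ Finset.range (r + 1),
            ((n - s).choose (r - s) : ℝ) * (-1 : ℝ) ^ s * (n.choose s) *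
              rise (θ + n - s) m := by
  simp only [← mul_div_assoc]
  rw [← Finset.sum_div, div_mul_eq_mul_div, key n m r hr θ]
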